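/- arXiv:1206.5221 — 7 statements merged into one kernel-verified Lean document; each statement's English description precedes it below -/
import Mathlib

section
/- Let Q be a digraph and a a source vertex of Q (every connection touching a is an outgoing arrow). Then in the Hecke–Kiselman monoid H_Q, for every element x one has a·x·a = a·x. -/
open FreeMonoid

structure HKGraph (V : Type) where
  edge : V → V → Prop
  arrow : V → V → Prop
  edge_symm : ∀ i j, edge i j → edge j i
  edge_irrefl : ∀ i, ¬ edge i i
  arrow_irrefl : ∀ i, ¬ arrow i i
  edge_not_arrow : ∀ i j, edge i j → ¬ arrow i j
  arrow_asymm : ∀ i j, arrow i j → ¬ arrow j i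

namespace HKGraph
variable {V : Type}

/-- The defining relations of the Hecke–Kiselman monoid of a digraph. -/
inductive Rel (Q : HKGraph V) : FreeMonoid V → FreeMonoid V → Prop
  | idem (i : V) : Rel Q (of i * of i) (of i)
  | comm (i j : V) : i ≠ j → ¬ Q.edge i j → ¬ Q.arrow i j → ¬ Q.arrow j i →
      Rel Q (of i * of j) (of j * of i)
  | braid (i j : V) : Q.edge i j → Rel Q (of i * of j * of i) (of j * of i * of j)
  | arrow_left (i j : V) : Q.arrow i j → Rel Q (of i * of j) (of i * of j * of i)
  | arrow_right (i j : V) : Q.arrow i j → Rel Q (of i * of j) (of j * of i * of j)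

/-- The Hecke–Kiselman monoid of a digraph. -/
abbrev HK (Q : HKGraph V) : Type := (conGen Q.Rel).Quotient

/-- The idempotent generator of `HK Q` attached to a vertex. -/
def gen (Q : HKGraph V) (i : V) : HK Q := Con.mk' _ (of i)

end HKGraph

/-- If `a` is a source vertex (every connection touching `a` is an outgoing arrow),
then `a·x·a = a·x` for every `x` in the Hecke–Kiselman monoid. -/
theorem source_absorb {V : Type} (Q : HKGraph V) (a : V)
    (hsource : (∀ j, ¬ Q.edge a j) ∧ (∀ j, ¬ Q.arrow j a)) :
    ∀ x : Q.HK, Q.gen a * x * Q.gen a = Q.gen a * x := by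

  have key : ∀ w : FreeMonoid V,
      (conGen Q.Rel) (of a * w * of a) (of a * w) := by
    intro w
    induction w using FreeMonoid.recOn with
    | one =>
      have h : (conGen Q.Rel) (of a * of a) (of a) := ConGen.Rel.of _ _ (HKGraph.Rel.idem a)
      simpa using h
    | of_mul j w' ih =>
      by_cases hja : j = a
      · rw [hja]
        have h1 : (conGen Q.Rel) (of a * (of a * w') * of a) (of a * w' * of a) := by
          have := (conGen Q.Rel).mul (ConGen.Rel.of _ _ (HKGraph.Rel.idem a))
            ((conGen Q.Rel).refl (w' * of a))
          simpa [mul_assoc] using this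
        have h2 : (conGen Q.Rel) (of a * w') (of a * (of a * w')) := by
          have := (conGen Q.Rel).mul
            ((conGen Q.Rel).symm (ConGen.Rel.of _ _ (HKGraph.Rel.idem a)))
            ((conGen Q.Rel).refl w')
          simpa [mul_assoc] using this
        exact (h1.trans ih).trans h2
      · have hne : a ≠ j := fun h => hja h.symm
        have hedge : ¬ Q.edge a j := hsource.1 j
        have harr : ¬ Q.arrow j a := hsource.2 j
        by_cases haj : Q.arrow a j
        · -- a j = a j a
          have hrel : (conGen Q.Rel) (of a * of j) (of a * of j * of a) :=
            ConGen.Rel.of _ _ (HKGraph.Rel.arrow_left a j haj)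
          have h1 : (conGen Q.Rel) (of a * (of j * w') * of a)
              ((of a * of j) * (of a * w' * of a)) := by
            have := (conGen Q.Rel).mul hrel ((conGen Q.Rel).refl (w' * of a))
            simpa [mul_assoc] using this
          have h2 : (conGen Q.Rel) ((of a * of j) * (of a * w' * of a))
              ((of a * of j) * (of a * w')) :=
            (conGen Q.Rel).mul ((conGen Q.Rel).refl _) ih
          have h3 : (conGen Q.Rel) ((of a * of j) * (of a * w'))
              (of a * (of j * w')) := by
            have := (conGen Q.Rel).mul ((conGen Q.Rel).symm hrel)
              ((conGen Q.Rel).refl w')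
            simpa [mul_assoc] using this
          exact (h1.trans h2).trans h3
        · have hrel : (conGen Q.Rel) (of a * of j) (of j * of a) :=
            ConGen.Rel.of _ _ (HKGraph.Rel.comm a j hne hedge haj harr)
          have h1 : (conGen Q.Rel) (of a * (of j * w') * of a)
              (of j * (of a * w' * of a)) := by
            have := (conGen Q.Rel).mul hrel ((conGen Q.Rel).refl (w' * of a))
            simpa [mul_assoc] using this
          have h2 : (conGen Q.Rel) (of j * (of a * w' * of a))
              (of j * (of a * w')) :=
            (conGen Q.Rel).mul ((conGen Q.Rel).refl _) ih
          have h3 : (conGen Q.Rel) (of j * (of a * w'))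
              (of a * (of j * w')) := by
            have := (conGen Q.Rel).mul ((conGen Q.Rel).symm hrel)
              ((conGen Q.Rel).refl w')
            simpa [mul_assoc] using this
          exact (h1.trans h2).trans h3
  intro x
  induction x using Con.induction_on with
  | H w =>
    show Con.mk' _ (of a) * Con.mk' _ w * Con.mk' _ (of a)
      = Con.mk' _ (of a) * Con.mk' _ w
    rw [← map_mul, ← map_mul]
    exact ((conGen Q.Rel).eq).mpr (key w)
end

section
/- Let Q be a digraph and a a sink vertex of Q (every connection touching a is an incoming arrow). Then in the Hecke–Kiselman monoid H_Q, for every element x one has a·x·a = x·a. -/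
open FreeMonoid

theorem hk_rel_eq {V : Type} {Q : HKGraph V} {x y : FreeMonoid V} (h : Q.Rel x y) :
    Con.mk' (conGen Q.Rel) x = Con.mk' (conGen Q.Rel) y :=
  Con.eq _ |>.mpr (ConGen.Rel.of _ _ h)

/-- If `a` is a sink vertex (every connection touching `a` is an incoming arrow),
then `a·x·a = x·a` for every `x` in the Hecke–Kiselman monoid. -/
theorem sink_absorb {V : Type} (Q : HKGraph V) (a : V)
    (hsink : (∀ j, ¬ Q.edge a j) ∧ (∀ j, ¬ Q.arrow a j)) :
    ∀ x : Q.HK, Q.gen a * x * Q.gen a = x * Q.gen a := by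
  obtain ⟨he, ha⟩ := hsink
  have key : ∀ j : V, Q.gen a * Q.gen j * Q.gen a = Q.gen j * Q.gen a := by
    intro j
    by_cases hja : j = a
    · subst hja
      have h1 : Q.gen j * Q.gen j = Q.gen j := hk_rel_eq (HKGraph.Rel.idem j)
      rw [h1, h1]
    · by_cases harr : Q.arrow j a
      · have h1 : Q.gen j * Q.gen a = Q.gen a * Q.gen j * Q.gen a :=
          hk_rel_eq (HKGraph.Rel.arrow_right j a harr)
        exact h1.symm
      · have hcomm : Q.gen a * Q.gen j = Q.gen j * Q.gen a :=
          hk_rel_eq (HKGraph.Rel.comm a j (fun h => hja h.symm) (he j) (ha j) harr)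
        have h1 : Q.gen a * Q.gen a = Q.gen a := hk_rel_eq (HKGraph.Rel.idem a)
        rw [hcomm, mul_assoc, h1]
  intro x
  induction x using Con.induction_on with
  | H w =>
    induction w using FreeMonoid.inductionOn' with
    | one =>
      show Q.gen a * (1 : Q.HK) * Q.gen a = 1 * Q.gen a
      rw [mul_one, one_mul]
      exact hk_rel_eq (HKGraph.Rel.idem a)
    | of_mul j w ih =>
      have hw : ((w : Q.HK) : Q.HK) = Con.mk' _ w := rfl
      show Q.gen a * ((Con.mk' (conGen Q.Rel)) (of j * w)) * Q.gen a = _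
      rw [map_mul]
      have hgj : (Con.mk' (conGen Q.Rel)) (of j) = Q.gen j := rfl
      have ihw : Q.gen a * (Con.mk' (conGen Q.Rel)) w * Q.gen a
          = (Con.mk' (conGen Q.Rel)) w * Q.gen a := ih
      rw [hgj]
      calc Q.gen a * (Q.gen j * (Con.mk' (conGen Q.Rel)) w) * Q.gen a
          = Q.gen a * Q.gen j * ((Con.mk' (conGen Q.Rel)) w * Q.gen a) := by
            rw [mul_assoc, mul_assoc, mul_assoc]
        _ = Q.gen a * Q.gen j * (Q.gen a * (Con.mk' (conGen Q.Rel)) w * Q.gen a) := by rw [ihw]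
        _ = (Q.gen a * Q.gen j * Q.gen a) * ((Con.mk' (conGen Q.Rel)) w * Q.gen a) := by
            rw [mul_assoc, mul_assoc, mul_assoc, mul_assoc]
        _ = (Q.gen j * Q.gen a) * ((Con.mk' (conGen Q.Rel)) w * Q.gen a) := by rw [key]
        _ = Q.gen j * (Q.gen a * (Con.mk' (conGen Q.Rel)) w * Q.gen a) := by
            rw [mul_assoc, mul_assoc]
        _ = Q.gen j * ((Con.mk' (conGen Q.Rel)) w * Q.gen a) := by rw [ihw]
        _ = Q.gen j * (Con.mk' (conGen Q.Rel)) w * Q.gen a := by rw [mul_assoc]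
end

section
/- For n ≥ 3, define maps u_1, …, u_n : ℤ^n → ℤ^n by u_i(m_1,…,m_n) = (m_1,…,m_{i-1}, m_{i+1}, m_{i+1}, m_{i+2},…,m_n) for 1 ≤ i ≤ n−1 (i.e. the i-th coordinate is replaced by m_{i+1}), and u_n(m_1,…,m_n) = (m_1,…,m_{n-1}, m_1 + 1). Then each u_i is idempotent, u_i ∘ u_j = u_j ∘ u_i whenever i and j are not cyclically adjacent (i.e. j ≢ i ± 1 mod n), and for each i (indices mod n) one has u_i ∘ u_{i+1} = u_i ∘ u_{i+1} ∘ u_i = u_{i+1} ∘ u_i ∘ u_{i+1}. -/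
/-- The map `u_i : ℤ^n → ℤ^n` (indices `0,…,n-1` for `1,…,n`): for `i < n-1`, it replaces
the `i`-th coordinate by the `(i+1)`-st one, and for `i = n-1` it replaces the last
coordinate by `m_0 + 1`. -/
def cycleMap (n : ℕ) [NeZero n] (i : Fin n) (m : Fin n → ℤ) : Fin n → ℤ :=
  Function.update m i (if (i : ℕ) = n - 1 then m 0 + 1 else m (i + 1))

lemma cycleMap_eq (n : ℕ) [NeZero n] (i : Fin n) (m : Fin n → ℤ) :
    cycleMap n i m =
      Function.update m i (m (i + 1) + if (i : ℕ) = n - 1 then 1 else 0) := by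
  unfold cycleMap
  by_cases h : (i : ℕ) = n - 1
  · have h1 : i + 1 = 0 := by
      apply Fin.ext
      have hn := Nat.pos_of_ne_zero (NeZero.ne n)
      simp [Fin.val_add, h, Nat.sub_add_cancel hn]
    simp [h, h1]
  · simp [h]

lemma cycleMap_apply (n : ℕ) [NeZero n] (i : Fin n) (m : Fin n → ℤ) (x : Fin n) :
    cycleMap n i m x =
      if x = i then m (i + 1) + (if (i : ℕ) = n - 1 then 1 else 0) else m x := by
  rw [cycleMap_eq, Function.update_apply]

/-- The maps `u_i` are idempotent, commute when not cyclically adjacent, and satisfy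
`u_i ∘ u_{i+1} = u_i ∘ u_{i+1} ∘ u_i = u_{i+1} ∘ u_i ∘ u_{i+1}` (indices mod `n`). -/
theorem cycleMap_relations (n : ℕ) [NeZero n] (hn : 3 ≤ n) :
    (∀ i : Fin n, cycleMap n i ∘ cycleMap n i = cycleMap n i) ∧
    (∀ i j : Fin n, j ≠ i + 1 → i ≠ j + 1 →
      cycleMap n i ∘ cycleMap n j = cycleMap n j ∘ cycleMap n i) ∧
    (∀ i : Fin n,
      cycleMap n i ∘ cycleMap n (i + 1) =
        cycleMap n i ∘ cycleMap n (i + 1) ∘ cycleMap n i ∧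
      cycleMap n i ∘ cycleMap n (i + 1) =
        cycleMap n (i + 1) ∘ cycleMap n i ∘ cycleMap n (i + 1)) := by
  have hsucc : ∀ i : Fin n, i + 1 ≠ i := by
    intro i h
    have h1 : (1 : Fin n) = 0 := add_left_cancel (a := i) (by simpa using h)
    have := Fin.one_eq_zero_iff.mp h1
    omega
  have hsucc2 : ∀ i : Fin n, i + 1 + 1 ≠ i := by
    intro i h
    have h1 : (2 : Fin n) = 0 := by
      have h2 : i + 2 = i + 0 := by
        rw [add_zero, show i + 2 = i + 1 + 1 by open Fin.CommRing in ring]; exact h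
      exact add_left_cancel h2
    open Fin.NatCast in have h3 : ((2 : ℕ) : Fin n) = 0 := by exact_mod_cast h1
    have h4 := Fin.natCast_eq_zero.mp h3
    have := Nat.le_of_dvd (by norm_num) h4
    omega
  refine ⟨?_, ?_, ?_⟩
  · intro i
    funext m x
    simp only [Function.comp_apply, cycleMap_apply]
    split_ifs <;> simp_all
  · intro i j hji hij
    rcases eq_or_ne i j with rfl | hne
    · rfl
    funext m x
    simp only [Function.comp_apply, cycleMap_apply]
    split_ifs <;> simp_all
  · intro i
    constructor <;>
    · funext m x
      simp only [Function.comp_apply, cycleMap_apply]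
      have h1 := hsucc i
      have h2 := hsucc (i + 1)
      have h3 := hsucc2 i
      split_ifs <;> simp_all
end

section
/- With u_1,…,u_n : ℤ^n → ℤ^n as above (n ≥ 3), the composite u = u_1 ∘ u_2 ∘ ⋯ ∘ u_n satisfies u(m_1,…,m_n) = (m_1+1, m_1+1, …, m_1+1), and consequently all powers u, u^2, u^3, … are pairwise distinct; hence the submonoid of Maps(ℤ^n) generated by u_1,…,u_n is infinite. -/
/-- The composite `u = u_1 ∘ u_2 ∘ ⋯ ∘ u_n`. -/
def cycleComp (n : ℕ) [NeZero n] : (Fin n → ℤ) → (Fin n → ℤ) :=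
  (List.ofFn (cycleMap n)).foldr (· ∘ ·) id

lemma foldr_drop (n : ℕ) [NeZero n] (hn : 3 ≤ n) (m : Fin n → ℤ) :
    ∀ i, i ≤ n →
      ((List.ofFn (cycleMap n)).drop i).foldr (· ∘ ·) id m
        = fun j : Fin n => if i ≤ (j : ℕ) then m 0 + 1 else m j := by
  intro i hi
  induction' h : n - i with t ih generalizing i
  · have : i = n := by omega
    subst this
    rw [List.drop_eq_nil_of_le (by simp)]
    simp only [List.foldr_nil, id]
    funext j
    rw [if_neg (by omega)]
  · have hilt : i < n := by omega
    rw [List.drop_eq_getElem_cons (by simpa using hilt), List.foldr_cons]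
    have hg := ih (i+1) (by omega) (by omega)
    simp only [Function.comp_apply, hg, List.getElem_ofFn]
    set g : Fin n → ℤ := fun j : Fin n => if i + 1 ≤ (j : ℕ) then m 0 + 1 else m j with hgdef
    show cycleMap n ⟨i, hilt⟩ g = _
    have h0 : g 0 = m 0 := by
      simp only [hgdef]
      rw [if_neg (by simp [Fin.val_zero])]
    have hv : (if ((⟨i, hilt⟩ : Fin n) : ℕ) = n - 1 then g 0 + 1 else g (⟨i, hilt⟩ + 1)) = m 0 + 1 := by
      by_cases hcase : i = n - 1
      · rw [if_pos hcase, h0]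
      · rw [if_neg hcase]
        have hval : ((⟨i, hilt⟩ + 1 : Fin n) : ℕ) = i + 1 := by
          rw [Fin.add_def]
          simp [Fin.val_one', Nat.mod_eq_of_lt (show 1 < n by omega),
            Nat.mod_eq_of_lt (show i + 1 < n by omega)]
        simp only [hgdef]
        rw [if_pos (by omega)]
    unfold cycleMap
    rw [hv]
    funext j
    rw [Function.update_apply]
    by_cases hji : j = ⟨i, hilt⟩
    · rw [if_pos hji, if_pos (by simp [hji])]
    · rw [if_neg hji]
      have : (j : ℕ) ≠ i := fun h => hji (Fin.ext h)
      simp only [hgdef]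
      by_cases hle : i ≤ (j : ℕ)
      · rw [if_pos (by omega), if_pos hle]
      · rw [if_neg (by omega), if_neg hle]

/-- `u = u_1 ∘ ⋯ ∘ u_n` sends `(m_1,…,m_n)` to `(m_1+1,…,m_1+1)`; its powers are
pairwise distinct, hence the submonoid of `Maps(ℤ^n)` generated by the `u_i` is
infinite. -/
theorem cycleComp_powers (n : ℕ) [NeZero n] (hn : 3 ≤ n) :
    (∀ m : Fin n → ℤ, cycleComp n m = fun _ => m 0 + 1) ∧
    (∀ k l : ℕ, 1 ≤ k → 1 ≤ l → k ≠ l → (cycleComp n)^[k] ≠ (cycleComp n)^[l]) ∧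
    Infinite (Submonoid.closure
      (Set.range (cycleMap n) : Set (Function.End (Fin n → ℤ)))) := by
  have hmain : ∀ m : Fin n → ℤ, cycleComp n m = fun _ => m 0 + 1 := by
    intro m
    have := foldr_drop n hn m 0 (by omega)
    simpa [cycleComp] using this
  have hiter : ∀ k : ℕ, 1 ≤ k → ∀ m : Fin n → ℤ,
      (cycleComp n)^[k] m = fun _ => m 0 + k := by
    intro k hk
    induction' k with k ih
    · omega
    · intro m
      rcases Nat.eq_or_lt_of_le hk with h1 | h1
      · simp only [← h1]
        simpa using hmain m
      · rw [Function.iterate_succ_apply', ih (by omega) m, hmain]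
        funext j
        push_cast
        ring
  have hdistinct : ∀ k l : ℕ, 1 ≤ k → 1 ≤ l → k ≠ l →
      (cycleComp n)^[k] ≠ (cycleComp n)^[l] := by
    intro k l hk hl hne heq
    have := congrFun (congrFun heq (fun _ => 0)) 0
    rw [hiter k hk, hiter l hl] at this
    simp at this
    exact hne (by exact_mod_cast this)
  refine ⟨hmain, hdistinct, ?_⟩
  set U : Function.End (Fin n → ℤ) := cycleComp n with hU
  have hmemu : U ∈ Submonoid.closure (Set.range (cycleMap n) : Set (Function.End (Fin n → ℤ))) := by
    have heq : U = (List.ofFn (cycleMap n) : List (Function.End (Fin n → ℤ))).prod := by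
      rw [List.prod_eq_foldr]; rfl
    rw [heq]
    refine list_prod_mem ?_
    intro x hx
    exact Submonoid.subset_closure (List.mem_ofFn.mp hx)
  have hpow : ∀ k : ℕ, (U ^ k : Function.End (Fin n → ℤ)) = (cycleComp n)^[k] := by
    intro k
    induction' k with k ih
    · rfl
    · rw [pow_succ, Function.iterate_succ, ← ih]; rfl
  refine Infinite.of_injective
    (fun k : ℕ => (⟨U ^ (k + 1), pow_mem hmemu (k + 1)⟩ :
      Submonoid.closure (Set.range (cycleMap n) : Set (Function.End (Fin n → ℤ))))) ?_
  intro a b hab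
  have h2 : U ^ (a + 1) = U ^ (b + 1) := congrArg Subtype.val hab
  rw [hpow, hpow] at h2
  by_contra hne
  exact hdistinct (a+1) (b+1) (by omega) (by omega) (by omega) h2
end

section
/- For n ≥ 3, the Hecke–Kiselman monoid H_Q of the oriented n-cycle Q (vertices a_1,…,a_n with an arrow from a_i to a_{i+1}, indices mod n) is infinite. -/
open FreeMonoid

section Aux

variable (n : ℕ) [NeZero n]

/-- The basic transformation of `ℤ` attached to a vertex of the cycle:
subtract `1` on the residue class of `i`, identity elsewhere. -/
def hkF (i : Fin n) : Function.End ℤ :=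
  fun x => if ((x : ZMod n) = ((i : ℕ) : ZMod n)) then x - 1 else x

lemma hkF_apply_le (i : Fin n) (x : ℤ) : hkF n i x ≤ x := by
  unfold hkF; split <;> omega

lemma hkF_prod_le (L : List (Fin n)) (x : ℤ) : (L.map (hkF n)).prod x ≤ x := by
  induction L generalizing x with
  | nil => simp only [List.map_nil, List.prod_nil]; exact le_rfl
  | cons a t ih =>
    have h1 : ((a :: t).map (hkF n)).prod = hkF n a * (t.map (hkF n)).prod := by
      simp
    have h2 : (hkF n a * (t.map (hkF n)).prod) x
        = hkF n a ((t.map (hkF n)).prod x) := rfl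
    rw [h1, h2]
    exact le_trans (hkF_apply_le n a _) (ih x)

lemma hkF_prod_lt (L : List (Fin n)) (x : ℤ)
    (h : ∃ r ∈ L, (x : ZMod n) = ((r : ℕ) : ZMod n)) :
    (L.map (hkF n)).prod x < x := by
  induction L generalizing x with
  | nil => simp at h
  | cons a t ih =>
    obtain ⟨r, hrL, hrx⟩ := h
    have h1 : ((a :: t).map (hkF n)).prod = hkF n a * (t.map (hkF n)).prod := by
      simp
    have h2 : (hkF n a * (t.map (hkF n)).prod) x
        = hkF n a ((t.map (hkF n)).prod x) := rfl
    rw [h1, h2]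
    rcases List.mem_cons.mp hrL with hra | hrt
    · rcases lt_or_eq_of_le (hkF_prod_le n t x) with hlt | heq
      · exact lt_of_le_of_lt (hkF_apply_le n a _) hlt
      · rw [heq]
        unfold hkF
        rw [if_pos (by rw [hrx, hra])]
        omega
    · have hlt : (t.map (hkF n)).prod x < x := ih x ⟨r, hrt, hrx⟩
      exact lt_of_le_of_lt (hkF_apply_le n a _) hlt

end Aux

/-- The Hecke–Kiselman monoid of the oriented `n`-cycle (`n ≥ 3`) is infinite. -/
theorem hk_oriented_cycle_infinite (n : ℕ) [NeZero n] (hn : 3 ≤ n)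
    (Q : HKGraph (Fin n))
    (harrow : ∀ i j : Fin n, Q.arrow i j ↔ j = i + 1)
    (hedge : ∀ i j : Fin n, ¬ Q.edge i j) :
    Infinite Q.HK := by
  -- notation for casting vertices into `ZMod n`
  set c : Fin n → ZMod n := fun i => ((i : ℕ) : ZMod n) with hc
  have hone : (1 : ZMod n) ≠ 0 := by
    intro h
    have h1 : ((1 : ℕ) : ZMod n) = 0 := by exact_mod_cast h
    have h2 := (ZMod.natCast_eq_zero_iff 1 n).mp h1
    have := Nat.le_of_dvd one_pos h2
    omega
  have htwo : (2 : ZMod n) ≠ 0 := by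
    intro h
    have h1 : ((2 : ℕ) : ZMod n) = 0 := by exact_mod_cast h
    have h2 := (ZMod.natCast_eq_zero_iff 2 n).mp h1
    have := Nat.le_of_dvd (by norm_num) h2
    omega
  have fact1 : ∀ a : ZMod n, a - 1 ≠ a := by
    intro a h; exact hone (by linear_combination -h)
  have fact2 : ∀ a : ZMod n, a - 1 ≠ a + 1 := by
    intro a h; exact htwo (by linear_combination -h)
  have fact3 : ∀ a : ZMod n, a ≠ a + 1 := by
    intro a h; exact hone (by linear_combination -h)
  have cinj : Function.Injective c := by
    intro i j hij
    simp only [hc] at hij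
    have := congrArg ZMod.val hij
    rw [ZMod.val_cast_of_lt i.isLt, ZMod.val_cast_of_lt j.isLt] at this
    exact Fin.ext this
  have csucc : ∀ i : Fin n, c (i + 1) = c i + 1 := by
    intro i
    have h1 : ((i + 1 : Fin n) : ℕ) = ((i : ℕ) + 1) % n := by
      rw [Fin.val_add, Fin.val_one' n, Nat.mod_eq_of_lt (show 1 < n by omega)]
    simp only [hc, h1, ZMod.natCast_mod, Nat.cast_add, Nat.cast_one]
  have castsub : ∀ x : ℤ, ((x - 1 : ℤ) : ZMod n) = (x : ZMod n) - 1 := by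
    intro x; push_cast; ring
  -- pointwise values of hkF
  have hpos : ∀ (i : Fin n) (x : ℤ), (x : ZMod n) = c i → hkF n i x = x - 1 :=
    fun i x hx => if_pos hx
  have hneg : ∀ (i : Fin n) (x : ℤ), (x : ZMod n) ≠ c i → hkF n i x = x :=
    fun i x hx => if_neg hx
  -- the monoid hom from the free monoid
  set fm : FreeMonoid (Fin n) →* Function.End ℤ := FreeMonoid.lift (hkF n) with hfm
  have hrel : ∀ a b, Q.Rel a b → fm a = fm b := by
    intro a b hab
    induction hab with
    | idem i =>
        simp only [hfm, map_mul, FreeMonoid.lift_eval_of]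
        funext x
        show hkF n i (hkF n i x) = hkF n i x
        by_cases hx : (x : ZMod n) = c i
        · rw [hpos i x hx, hneg i (x - 1) (by rw [castsub, hx]; exact fact1 _)]
        · rw [hneg i x hx, hneg i x hx]
    | comm i j hij he ha1 ha2 =>
        have hj : c j ≠ c i + 1 := by
          intro h
          exact ((harrow i j).not.mp ha1) (cinj (by rw [csucc i, h]))
        have hi : c i ≠ c j + 1 := by
          intro h
          exact ((harrow j i).not.mp ha2) (cinj (by rw [csucc j, h]))
        have hij' : c i ≠ c j := fun h => hij (cinj h)
        simp only [hfm, map_mul, FreeMonoid.lift_eval_of]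
        funext x
        show hkF n i (hkF n j x) = hkF n j (hkF n i x)
        by_cases hxj : (x : ZMod n) = c j
        · have hxi : (x : ZMod n) ≠ c i := by rw [hxj]; exact fun h => hij' h.symm
          rw [hpos j x hxj, hneg i x hxi, hpos j x hxj,
            hneg i (x - 1) (by rw [castsub, hxj]; intro h; exact hj (by linear_combination h))]
        · rw [hneg j x hxj]
          by_cases hxi : (x : ZMod n) = c i
          · rw [hpos i x hxi,
              hneg j (x - 1) (by rw [castsub, hxi]; intro h; exact hi (by linear_combination h))]
          · rw [hneg i x hxi, hneg j x hxj]
    | braid i j he => exact absurd he (hedge i j)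
    | arrow_left i j ha =>
        have hji : c j = c i + 1 := by rw [(harrow i j).mp ha, csucc]
        have hine : c i ≠ c j := by rw [hji]; exact fact3 _
        simp only [hfm, map_mul, FreeMonoid.lift_eval_of]
        funext x
        show hkF n i (hkF n j x) = hkF n i (hkF n j (hkF n i x))
        by_cases hxi : (x : ZMod n) = c i
        · have hs : ((x - 1 : ℤ) : ZMod n) = c i - 1 := by rw [castsub, hxi]
          rw [hpos i x hxi,
            hneg j (x - 1) (by rw [hs, hji]; exact fact2 _),
            hneg i (x - 1) (by rw [hs]; exact fact1 _),
            hneg j x (by rw [hxi]; exact hine),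
            hpos i x hxi]
        · rw [hneg i x hxi]
    | arrow_right i j ha =>
        have hji : c j = c i + 1 := by rw [(harrow i j).mp ha, csucc]
        have hine : c i ≠ c j := by rw [hji]; exact fact3 _
        simp only [hfm, map_mul, FreeMonoid.lift_eval_of]
        funext x
        show hkF n i (hkF n j x) = hkF n j (hkF n i (hkF n j x))
        by_cases hxj : (x : ZMod n) = c j
        · have hs : ((x - 1 : ℤ) : ZMod n) = c i := by
            rw [castsub, hxj, hji]; ring
          have hs2 : ((x - 1 - 1 : ℤ) : ZMod n) = c i - 1 := by
            rw [castsub, hs]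
          rw [hpos j x hxj, hpos i (x - 1) hs,
            hneg j (x - 1 - 1) (by rw [hs2, hji]; exact fact2 _)]
        · rw [hneg j x hxj]
          by_cases hxi : (x : ZMod n) = c i
          · have hs : ((x - 1 : ℤ) : ZMod n) = c i - 1 := by rw [castsub, hxi]
            rw [hpos i x hxi,
              hneg j (x - 1) (by rw [hs, hji]; exact fact2 _)]
          · rw [hneg i x hxi, hneg j x hxj]
  have hker : conGen Q.Rel ≤ Con.ker fm :=
    Con.conGen_le.mpr (fun a b h => (Con.ker_rel fm).mpr (hrel a b h))
  set φ : Q.HK →* Function.End ℤ := (conGen Q.Rel).lift fm hker with hφ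
  have hφgen : ∀ i : Fin n, φ (Q.gen i) = hkF n i := by
    intro i
    simp only [hφ, HKGraph.gen, Con.lift_mk', hfm, FreeMonoid.lift_eval_of]
  -- the element of infinite order
  set h : Q.HK := ((List.finRange n).map Q.gen).prod with hh
  set F : Function.End ℤ := ((List.finRange n).map (hkF n)).prod with hF
  have hφh : φ h = F := by
    have hmaps : List.map (⇑φ ∘ Q.gen) (List.finRange n)
        = List.map (hkF n) (List.finRange n) :=
      List.map_congr_left (fun i _ => hφgen i)
    rw [hh, map_list_prod, List.map_map, hmaps, hF]
  have hFlt : ∀ x : ℤ, F x < x := by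
    intro x
    apply hkF_prod_lt
    refine ⟨⟨(x : ZMod n).val, ZMod.val_lt _⟩, List.mem_finRange _, ?_⟩
    exact (ZMod.natCast_rightInverse (x : ZMod n)).symm
  -- the powers of F at 0 are strictly decreasing
  have hanti : StrictAnti (fun k : ℕ => (F ^ k) (0 : ℤ)) := by
    apply strictAnti_nat_of_succ_lt
    intro k
    have hstep : (F ^ (k + 1)) (0 : ℤ) = F ((F ^ k) 0) := by
      rw [pow_succ']
      rfl
    calc (F ^ (k + 1)) (0 : ℤ) = F ((F ^ k) 0) := hstep
      _ < (F ^ k) 0 := hFlt _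
  have hinj : Function.Injective (fun k : ℕ => h ^ k) := by
    intro k m hkm
    dsimp only at hkm
    have h1 : φ (h ^ k) = φ (h ^ m) := by rw [hkm]
    rw [map_pow, map_pow, hφh] at h1
    exact hanti.injective (show (F ^ k) (0 : ℤ) = (F ^ m) 0 by rw [h1])
  exact Infinite.of_injective _ hinj
end

section
/- In the Hecke–Kiselman monoid H_{Q'} of the digraph Q' with vertices a,b,c,d, edges a—b and c—d, arrows a→c, a→d, b→c, and b,d unconnected, the element x^3 = abacdc (where x = adbc) is a right zero for the generators: x^3·a = x^3·b = x^3·c = x^3·d = x^3. -/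
open FreeMonoid

/-- The four vertices `a, b, c, d` of the digraph `Q'`. -/
inductive V4 : Type | a | b | c | d

open V4

/-- Defining relations of the Hecke–Kiselman monoid of `K`: edges `a—b`, `c—d`,
arrows `a→c`, `a→d`, `b→c`; `b` and `d` unconnected. -/
inductive QRel : FreeMonoid V4 → FreeMonoid V4 → Prop
  | idem (x : V4) : QRel (of x * of x) (of x)
  | braid_ab : QRel (of a * of b * of a) (of b * of a * of b)
  | braid_cd : QRel (of c * of d * of c) (of d * of c * of d)
  | ac₁ : QRel (of a * of c) (of a * of c * of a)
  | ac₂ : QRel (of a * of c) (of c * of a * of c)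
  | ad₁ : QRel (of a * of d) (of a * of d * of a)
  | ad₂ : QRel (of a * of d) (of d * of a * of d)
  | bc₁ : QRel (of b * of c) (of b * of c * of b)
  | bc₂ : QRel (of b * of c) (of c * of b * of c)
  | comm_bd : QRel (of b * of d) (of d * of b)

/-- The Hecke–Kiselman monoid `H_{Q'}`. -/
abbrev HKQ' : Type := (conGen QRel).Quotient

/-- Images of the generators in `H_{Q'}`. -/
def ga : HKQ' := Con.mk' _ (of a)
def gb : HKQ' := Con.mk' _ (of b)
def gc : HKQ' := Con.mk' _ (of c)
def gd : HKQ' := Con.mk' _ (of d)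

lemma mstep (l1 l2 : List V4) {u v : FreeMonoid V4} (h : QRel u v) :
    Con.mk' (conGen QRel) (ofList l1 * u * ofList l2) =
    Con.mk' (conGen QRel) (ofList l1 * v * ofList l2) := by
  refine (Con.eq _).mpr ?_
  exact (((conGen QRel).refl _).mul (ConGen.Rel.of _ _ h)).mul ((conGen QRel).refl _)

/-- In `H_{Q'}`, the element `x³ = abacdc` (where `x = adbc`) is a right zero for the
generators. -/
theorem hkQ'_abacdc_right_zero :
    (ga * gb * ga * gc * gd * gc) * ga = ga * gb * ga * gc * gd * gc ∧
    (ga * gb * ga * gc * gd * gc) * gb = ga * gb * ga * gc * gd * gc ∧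
    (ga * gb * ga * gc * gd * gc) * gc = ga * gb * ga * gc * gd * gc ∧
    (ga * gb * ga * gc * gd * gc) * gd = ga * gb * ga * gc * gd * gc := by
  refine ⟨?_, ?_, ?_, ?_⟩
  · show Con.mk' (conGen QRel) (ofList [a,b,a,c,d,c,a]) = Con.mk' _ (ofList [a,b,a,c,d,c])
    calc Con.mk' (conGen QRel) (ofList [a,b,a,c,d,c,a])
        = Con.mk' (conGen QRel) (ofList [a,b,a,c,a,d,c,a]) := mstep [a,b] [d,c,a] QRel.ac₁
      _ = Con.mk' (conGen QRel) (ofList [a,b,a,c,a,d,a,c,a]) := mstep [a,b,a,c] [c,a] QRel.ad₁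
      _ = Con.mk' (conGen QRel) (ofList [a,b,a,c,a,d,a,c]) := (mstep [a,b,a,c,a,d] [] QRel.ac₁).symm
      _ = Con.mk' (conGen QRel) (ofList [a,b,a,c,a,d,c]) := (mstep [a,b,a,c] [c] QRel.ad₁).symm
      _ = Con.mk' (conGen QRel) (ofList [a,b,a,c,d,c]) := (mstep [a,b] [d,c] QRel.ac₁).symm
  · show Con.mk' (conGen QRel) (ofList [a,b,a,c,d,c,b]) = Con.mk' _ (ofList [a,b,a,c,d,c])
    calc Con.mk' (conGen QRel) (ofList [a,b,a,c,d,c,b])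
        = Con.mk' (conGen QRel) (ofList [b,a,b,c,d,c,b]) := mstep [] [c,d,c,b] QRel.braid_ab
      _ = Con.mk' (conGen QRel) (ofList [b,a,b,c,b,d,c,b]) := mstep [b,a] [d,c,b] QRel.bc₁
      _ = Con.mk' (conGen QRel) (ofList [b,a,b,c,d,b,c,b]) := mstep [b,a,b,c] [c,b] QRel.comm_bd
      _ = Con.mk' (conGen QRel) (ofList [b,a,b,c,d,b,c]) := (mstep [b,a,b,c,d] [] QRel.bc₁).symm
      _ = Con.mk' (conGen QRel) (ofList [b,a,b,c,b,d,c]) := (mstep [b,a,b,c] [c] QRel.comm_bd).symm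
      _ = Con.mk' (conGen QRel) (ofList [b,a,b,c,d,c]) := (mstep [b,a] [d,c] QRel.bc₁).symm
      _ = Con.mk' (conGen QRel) (ofList [a,b,a,c,d,c]) := (mstep [] [c,d,c] QRel.braid_ab).symm
  · show Con.mk' (conGen QRel) (ofList [a,b,a,c,d,c,c]) = Con.mk' _ (ofList [a,b,a,c,d,c])
    exact mstep [a,b,a,c,d] [] (QRel.idem c)
  · show Con.mk' (conGen QRel) (ofList [a,b,a,c,d,c,d]) = Con.mk' _ (ofList [a,b,a,c,d,c])
    calc Con.mk' (conGen QRel) (ofList [a,b,a,c,d,c,d])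
        = Con.mk' (conGen QRel) (ofList [a,b,a,d,c,d,d]) := mstep [a,b,a] [d] QRel.braid_cd
      _ = Con.mk' (conGen QRel) (ofList [a,b,a,d,c,d]) := mstep [a,b,a,d,c] [] (QRel.idem d)
      _ = Con.mk' (conGen QRel) (ofList [a,b,a,c,d,c]) := (mstep [a,b,a] [] QRel.braid_cd).symm
end

section
/- Let Q be a digraph all of whose Coxeter components are single points (i.e. Q is an oriented graph: all connections are arrows), and suppose Q has no oriented cycle. Then the Hecke–Kiselman monoid H_Q is a quotient of the Kiselman monoid K_n (n = |Q|), and hence is finite. -/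
open FreeMonoid

namespace HKGraph

/-- An oriented cycle: `n ≥ 3` distinct vertices cyclically joined by arrows. -/
def HasOrientedCycle {V : Type} (Q : HKGraph V) : Prop :=
  ∃ n : ℕ, ∃ f : Fin (n + 3) → V, Function.Injective f ∧
    ∀ i : Fin (n + 3), Q.arrow (f i) (f (i + 1))

end HKGraph

/-- A word is reduced if between any two occurrences of a letter `i` there is
a letter not above `i` and a letter not below `i`. -/
def KReduced {n : ℕ} (w : List (Fin n)) : Prop :=
  ∀ (x : List (Fin n)) (i : Fin n) (y z : List (Fin n)),
    w = x ++ i :: (y ++ i :: z) → (∃ j ∈ y, ¬ i < j) ∧ (∃ j ∈ y, ¬ j < i)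

section Kis
variable {n : ℕ} (Q' : HKGraph (Fin n)) (ha : ∀ i j, Q'.arrow i j ↔ i < j)
include ha

/-- absorb a second `i` after a block of larger letters -/
lemma kup : ∀ (v : List (Fin n)) (i : Fin n), (∀ j ∈ v, i < j) →
    (conGen Q'.Rel) (ofList (i :: (v ++ [i]))) (ofList (i :: v)) := by
  intro v
  induction v with
  | nil =>
    intro i _
    have h : Q'.Rel (of i * of i) (of i) := HKGraph.Rel.idem i
    exact ConGen.Rel.of _ _ h
  | cons j v ih =>
    intro i hv
    have hij : i < j := hv j (by simp)
    have h1 : (conGen Q'.Rel) (of i * of j) (of i * of j * of i) :=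
      ConGen.Rel.of _ _ (HKGraph.Rel.arrow_left i j ((ha i j).mpr hij))
    have ihv : (conGen Q'.Rel) (ofList (i :: (v ++ [i]))) (ofList (i :: v)) :=
      ih i (fun k hk => hv k (by simp [hk]))
    -- i :: (j :: v ++ [i]) = (i::j::[]) ++ (v ++ [i])
    have e1 : ofList (i :: ((j :: v) ++ [i])) = (of i * of j) * ofList (v ++ [i]) := rfl
    have e2 : ofList (i :: (j :: v)) = (of i * of j) * ofList v := rfl
    rw [e1, e2]
    have step1 : (conGen Q'.Rel) ((of i * of j) * ofList (v ++ [i]))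
        ((of i * of j * of i) * ofList (v ++ [i])) :=
      (conGen Q'.Rel).mul h1 ((conGen Q'.Rel).refl _)
    have e3 : (of i * of j * of i) * ofList (v ++ [i]) = (of i * of j) * ofList (i :: (v ++ [i])) := by
      simp [ofList_cons, mul_assoc]
    have step2 : (conGen Q'.Rel) ((of i * of j) * ofList (i :: (v ++ [i])))
        ((of i * of j) * ofList (i :: v)) :=
      (conGen Q'.Rel).mul ((conGen Q'.Rel).refl _) ihv
    have e4 : (of i * of j) * ofList (i :: v) = (of i * of j * of i) * ofList v := by
      simp [ofList_cons, mul_assoc]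
    have step3 : (conGen Q'.Rel) ((of i * of j * of i) * ofList v) ((of i * of j) * ofList v) :=
      (conGen Q'.Rel).mul ((conGen Q'.Rel).symm h1) ((conGen Q'.Rel).refl _)
    exact ((step1.trans (e3 ▸ step2)).trans (e4 ▸ step3))

/-- absorb the first `i` before a block of smaller letters -/
lemma kdown : ∀ (v : List (Fin n)) (i : Fin n), (∀ j ∈ v, j < i) →
    (conGen Q'.Rel) (ofList (i :: (v ++ [i]))) (ofList (v ++ [i])) := by
  intro v
  induction v using List.reverseRecOn with
  | nil =>
    intro i _
    exact ConGen.Rel.of _ _ (HKGraph.Rel.idem i)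
  | append_singleton v j ih =>
    intro i hv
    have hji : j < i := hv j (by simp)
    -- of j * of i ~ of i * of j * of i  (arrow_right j i, symm)
    have h1 : (conGen Q'.Rel) (of i * of j * of i) (of j * of i) :=
      (conGen Q'.Rel).symm (ConGen.Rel.of _ _ (HKGraph.Rel.arrow_right j i ((ha j i).mpr hji)))
    have ihv : (conGen Q'.Rel) (ofList (i :: (v ++ [i]))) (ofList (v ++ [i])) :=
      ih i (fun k hk => hv k (by simp [hk]))
    have h1' : (conGen Q'.Rel) (of j * of i) (of i * of j * of i) := (conGen Q'.Rel).symm h1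
    have e1 : ofList (i :: ((v ++ [j]) ++ [i])) = (of i * ofList v) * (of j * of i) := by
      simp [ofList_cons, ofList_append, ofList_singleton, mul_assoc]
    have e2 : (of i * ofList v) * (of i * of j * of i) = ofList (i :: (v ++ [i])) * (of j * of i) := by
      simp [ofList_cons, ofList_append, ofList_singleton, mul_assoc]
    have e3 : ofList (v ++ [i]) * (of j * of i) = ofList v * (of i * of j * of i) := by
      simp [ofList_cons, ofList_append, ofList_singleton, mul_assoc]
    have e4 : ofList v * (of j * of i) = ofList ((v ++ [j]) ++ [i]) := by
      simp [ofList_cons, ofList_append, ofList_singleton, mul_assoc]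
    rw [e1]
    have step1 := (conGen Q'.Rel).mul ((conGen Q'.Rel).refl (of i * ofList v)) h1'
    have step2 := (conGen Q'.Rel).mul ihv ((conGen Q'.Rel).refl (of j * of i))
    have step3 := (conGen Q'.Rel).mul ((conGen Q'.Rel).refl (ofList v)) h1
    exact ((step1.trans (e2 ▸ step2)).trans (e3 ▸ step3)).trans (e4 ▸ (conGen Q'.Rel).refl _)

lemma exists_reduced : ∀ (N : ℕ) (w : List (Fin n)), w.length ≤ N →
    ∃ w' : List (Fin n), (conGen Q'.Rel) (ofList w) (ofList w') ∧ KReduced w' := by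
  intro N
  induction N with
  | zero =>
    intro w hw
    refine ⟨w, (conGen Q'.Rel).refl _, ?_⟩
    intro x i y z hxyz
    exfalso
    have := congrArg List.length hxyz
    simp at this; omega
  | succ N IH =>
    intro w hw
    by_cases hred : KReduced w
    · exact ⟨w, (conGen Q'.Rel).refl _, hred⟩
    · simp only [KReduced, not_forall] at hred
      obtain ⟨x, i, y, z, hxyz, hf⟩ := hred
      rw [Classical.not_and_iff_not_or_not] at hf
      subst hxyz
      rcases hf with hf | hf
      · -- all letters of y are above i : absorb the second i
        push_neg at hf
        have key := kup Q' ha y i hf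
        have e1 : ofList (x ++ i :: (y ++ i :: z)) = ofList x * ofList (i :: (y ++ [i])) * ofList z := by
          simp [ofList_cons, ofList_append, ofList_singleton, mul_assoc]
        have e2 : ofList x * ofList (i :: y) * ofList z = ofList (x ++ i :: (y ++ z)) := by
          simp [ofList_cons, ofList_append, ofList_singleton, mul_assoc]
        have step : (conGen Q'.Rel) (ofList (x ++ i :: (y ++ i :: z))) (ofList (x ++ i :: (y ++ z))) := by
          rw [e1, ← e2]
          exact ((conGen Q'.Rel).mul ((conGen Q'.Rel).mul ((conGen Q'.Rel).refl _) key)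
            ((conGen Q'.Rel).refl _))
        obtain ⟨w', hc, hr⟩ := IH (x ++ i :: (y ++ z)) (by
          have := hw; simp at this ⊢; omega)
        exact ⟨w', step.trans hc, hr⟩
      · push_neg at hf
        have key := kdown Q' ha y i hf
        have e1 : ofList (x ++ i :: (y ++ i :: z)) = ofList x * ofList (i :: (y ++ [i])) * ofList z := by
          simp [ofList_cons, ofList_append, ofList_singleton, mul_assoc]
        have e2 : ofList x * ofList (y ++ [i]) * ofList z = ofList (x ++ (y ++ i :: z)) := by
          simp [ofList_cons, ofList_append, ofList_singleton, mul_assoc]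
        have step : (conGen Q'.Rel) (ofList (x ++ i :: (y ++ i :: z))) (ofList (x ++ (y ++ i :: z))) := by
          rw [e1, ← e2]
          exact ((conGen Q'.Rel).mul ((conGen Q'.Rel).mul ((conGen Q'.Rel).refl _) key)
            ((conGen Q'.Rel).refl _))
        obtain ⟨w', hc, hr⟩ := IH (x ++ (y ++ i :: z)) (by
          have := hw; simp at this ⊢; omega)
        exact ⟨w', step.trans hc, hr⟩
end Kis

section Count
variable {n : ℕ}
variable {n : ℕ}

/-- Joint counting lemma for reduced-type words. -/
lemma countAux (i : Fin n) : ∀ w : List (Fin n),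
    ((∀ x y z, w = x ++ i :: (y ++ i :: z) → i ∉ y → ∃ j ∈ y, i < j) →
      w.count i ≤ w.countP (fun j => decide (i < j)) + 1)
    ∧ ((∀ x y z, w = x ++ i :: (y ++ i :: z) → i ∉ y → ∃ j ∈ y, i < j) →
      (∀ y z, w = y ++ i :: z → i ∉ y → ∃ j ∈ y, i < j) →
      w.count i ≤ w.countP (fun j => decide (i < j))) := by
  intro w
  induction w with
  | nil => simp
  | cons b t IH =>
    have hdesc : (∀ x y z, (b :: t) = x ++ i :: (y ++ i :: z) → i ∉ y → ∃ j ∈ y, i < j) →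
        (∀ x y z, t = x ++ i :: (y ++ i :: z) → i ∉ y → ∃ j ∈ y, i < j) := by
      intro H x y z ht hy
      exact H (b :: x) y z (by rw [ht]; rfl) hy
    constructor
    · intro H
      by_cases hb : b = i
      · subst hb
        have hH : ∀ y z, t = y ++ b :: z → b ∉ y → ∃ j ∈ y, b < j := by
          intro y z ht hy
          exact H [] y z (by rw [ht]; rfl) hy
        have := (IH).2 (hdesc H) hH
        simp [List.count_cons, List.countP_cons]
        omega
      · have := (IH).1 (hdesc H)
        simp [List.count_cons, List.countP_cons, hb, Ne.symm hb]
        split <;> omega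
    · intro H Hfst
      by_cases hb : b = i
      · exfalso
        subst hb
        obtain ⟨j, hj, -⟩ := Hfst [] t rfl (by simp)
        simp at hj
      · by_cases hib : i < b
        · have := (IH).1 (hdesc H)
          simp [List.count_cons, List.countP_cons, hb, Ne.symm hb, hib]
          omega
        · have hH : ∀ y z, t = y ++ i :: z → i ∉ y → ∃ j ∈ y, i < j := by
            intro y z ht hy
            obtain ⟨j, hj, hij⟩ := Hfst (b :: y) z (by rw [ht]; rfl)
              (by simp [hy]; intro h; exact hb h.symm)
            rcases List.mem_cons.mp hj with rfl | hjy
            · exact absurd hij hib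
            · exact ⟨j, hjy, hij⟩
          have := (IH).2 (hdesc H) hH
          simp [List.count_cons, List.countP_cons, hb, Ne.symm hb, hib]
          omega

lemma countP_le_sum (p : Fin n → Bool) : ∀ w : List (Fin n),
    w.countP p ≤ ∑ j ∈ Finset.univ.filter (fun j => p j = true), w.count j := by
  intro w
  induction w with
  | nil => simp
  | cons a t IH =>
    have e : ∀ j, (a :: t).count j = t.count j + if a = j then 1 else 0 := by
      intro j; simp [List.count_cons]
    simp only [List.countP_cons, e]
    rw [Finset.sum_add_distrib]
    rw [Finset.sum_ite_eq (Finset.univ.filter (fun j => p j = true)) a (fun _ => 1)]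
    by_cases hpa : p a = true <;> simp [hpa] <;> omega

lemma geomtwo : ∀ m : ℕ, ∑ x ∈ Finset.range m, 2 ^ x = 2 ^ m - 1 := by
  intro m
  induction m with
  | zero => simp
  | succ m IH =>
    rw [Finset.sum_range_succ, IH, pow_succ]
    have : 1 ≤ 2 ^ m := Nat.one_le_two_pow
    omega

lemma length_eq_sum_count : ∀ w : List (Fin n), w.length = ∑ i : Fin n, w.count i := by
  intro w
  induction w with
  | nil => simp
  | cons a t IH =>
    have e : ∀ j, (a :: t).count j = t.count j + if a = j then 1 else 0 := by
      intro j; simp [List.count_cons]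
    simp only [e, Finset.sum_add_distrib, List.length_cons, IH]
    rw [Finset.sum_ite_eq Finset.univ a (fun _ => 1)]
    simp

lemma reduced_count {w : List (Fin n)} (hr : KReduced w) (i : Fin n) :
    w.count i ≤ w.countP (fun j => decide (i < j)) + 1 := by
  refine (countAux i w).1 ?_
  intro x y z hw hy
  obtain ⟨-, j, hj, hji⟩ := hr x i y z hw
  exact ⟨j, hj, lt_of_le_of_ne (not_lt.mp hji) (fun h => hy (h ▸ hj))⟩

lemma reduced_count_pow {w : List (Fin n)} (hr : KReduced w) :
    ∀ (m : ℕ) (i : Fin n), n - 1 - i.val ≤ m → w.count i ≤ 2 ^ (n - 1 - i.val) := by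
  intro m
  induction m with
  | zero =>
    intro i hi
    have hfil : Finset.univ.filter (fun j => decide (i < j) = true) = ∅ := by
      apply Finset.eq_empty_of_forall_notMem
      intro j hj
      simp at hj
      have := j.isLt
      have := i.isLt
      omega
    have h1 := reduced_count hr i
    have h2 := countP_le_sum (fun j => decide (i < j)) w
    rw [hfil, Finset.sum_empty] at h2
    have hz : n - 1 - i.val = 0 := Nat.le_zero.mp hi
    rw [hz, pow_zero]
    omega
  | succ m IH =>
    intro i hi
    have h1 := reduced_count hr i
    have h2 := countP_le_sum (fun j => decide (i < j)) w
    have h3 : ∑ j ∈ Finset.univ.filter (fun j => decide (i < j) = true), w.count j ≤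
        ∑ j ∈ Finset.univ.filter (fun j => decide (i < j) = true), 2 ^ (n - 1 - j.val) := by
      apply Finset.sum_le_sum
      intro j hj
      simp at hj
      apply IH
      have := j.isLt
      have h4 : i.val < j.val := hj
      omega
    have h5 : ∑ j ∈ Finset.univ.filter (fun j => decide (i < j) = true), 2 ^ (n - 1 - j.val) ≤
        2 ^ (n - 1 - i.val) - 1 := by
      have hinj : Set.InjOn (fun j : Fin n => n - 1 - j.val)
          (Finset.univ.filter (fun j => decide (i < j) = true)) := by
        intro a ha b hb hab
        simp at ha hb hab
        have := a.isLt; have := b.isLt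
        exact Fin.ext (by omega)
      rw [← Finset.sum_image (fun a ha b hb h => hinj ha hb h)]
      have hsub : (Finset.univ.filter (fun j => decide (i < j) = true)).image
          (fun j : Fin n => n - 1 - j.val) ⊆ Finset.range (n - 1 - i.val) := by
        intro x hx
        simp at hx ⊢
        obtain ⟨j, hij, rfl⟩ := hx
        have := j.isLt
        have : i.val < j.val := hij
        omega
      calc _ ≤ ∑ x ∈ Finset.range (n - 1 - i.val), 2 ^ x :=
              Finset.sum_le_sum_of_subset hsub
        _ = 2 ^ (n - 1 - i.val) - 1 := geomtwo _
    have : 1 ≤ 2 ^ (n - 1 - i.val) := Nat.one_le_two_pow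
    omega

lemma reduced_length {w : List (Fin n)} (hr : KReduced w) : w.length ≤ n * 2 ^ n := by
  rw [length_eq_sum_count w]
  calc ∑ i : Fin n, w.count i ≤ ∑ _i : Fin n, 2 ^ n := by
        apply Finset.sum_le_sum
        intro i _
        calc w.count i ≤ 2 ^ (n - 1 - i.val) := reduced_count_pow hr _ i le_rfl
          _ ≤ 2 ^ n := Nat.pow_le_pow_right (by norm_num) (by omega)
    _ = n * 2 ^ n := by simp [Finset.sum_const, Finset.card_univ]
end Count


section KisFin
variable {n : ℕ} (Q' : HKGraph (Fin n)) (ha : ∀ i j, Q'.arrow i j ↔ i < j)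
include ha

lemma kiselman_finite : Finite (HKGraph.HK Q') := by
  classical
  have key : ∀ q : (HKGraph.HK Q'),
      ∃ l : {l : List (Fin n) // l.length ≤ n * 2 ^ n}, (Con.mk' _ (ofList l.1) : HKGraph.HK Q') = q := by
    intro q
    refine Con.induction_on q ?_
    intro w
    obtain ⟨w', hc, hr⟩ := exists_reduced Q' ha (toList w).length (toList w) le_rfl
    refine ⟨⟨w', reduced_length hr⟩, ?_⟩
    rw [Con.coe_mk']
    rw [show w = ofList (toList w) from rfl] -- maybe rfl
    exact ((Con.eq _).mpr ((conGen Q'.Rel).symm hc))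
  have hfin : Finite {l : List (Fin n) // l.length ≤ n * 2 ^ n} :=
    (List.finite_length_le (Fin n) (n * 2 ^ n)).to_subtype
  exact Finite.of_surjective
    (fun l : {l : List (Fin n) // l.length ≤ n * 2 ^ n} => (Con.mk' _ (ofList l.1) : HKGraph.HK Q'))
    (fun q => key q)
end KisFin

lemma exists_dup_decomp {α : Type} {l : List α} (h : ¬ l.Nodup) :
    ∃ (u : List α) (d : α) (v w : List α), l = u ++ d :: v ++ d :: w := by
  induction l with
  | nil => simp at h
  | cons a t ih =>
    by_cases hat : a ∈ t
    · obtain ⟨s, r, rfl⟩ := List.append_of_mem hat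
      exact ⟨[], a, s, r, by simp⟩
    · have ht : ¬ t.Nodup := by
        intro hnd
        exact h (List.nodup_cons.mpr ⟨hat, hnd⟩)
      obtain ⟨u, d, v, w, rfl⟩ := ih ht
      exact ⟨a :: u, d, v, w, rfl⟩

lemma no_transGen_self {V : Type} (Q : HKGraph V) (hcyc : ¬ Q.HasOrientedCycle) (a : V) :
    ¬ Relation.TransGen Q.arrow a a := by
  classical
  intro htg
  have hex : ∃ k : ℕ, ∃ (b : V) (t : List V), t.length = k ∧ List.Chain Q.arrow b (t ++ [b]) := by
    obtain ⟨b, hab, hba⟩ := Relation.TransGen.head'_iff.mp htg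
    obtain ⟨l, hch, hlast⟩ := List.exists_isChain_cons_of_relationReflTransGen hba
    have hch2 : List.Chain Q.arrow a (b :: l) := List.Chain.cons hab hch
    have hne : (b :: l) ≠ [] := by simp
    have hlast2 : (b :: l).getLast hne = a := hlast
    have hdec : (b :: l).dropLast ++ [a] = b :: l := by
      conv_rhs => rw [← List.dropLast_append_getLast hne]
      rw [hlast2]
    exact ⟨_, a, (b :: l).dropLast, rfl, by rw [hdec]; exact hch2⟩
  obtain ⟨b, t, hlen, hch⟩ := Nat.find_spec hex
  have hmin : ∀ k < Nat.find hex,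
      ¬ ∃ (b : V) (t : List V), t.length = k ∧ List.Chain Q.arrow b (t ++ [b]) :=
    fun k hk => Nat.find_min hex hk
  rcases t with - | ⟨x, t1⟩
  · rw [List.nil_append] at hch
    exact Q.arrow_irrefl b (List.chain_cons.mp hch).1
  rcases t1 with - | ⟨y, t'⟩
  · have h1 := List.chain_cons.mp hch
    have h2 := List.chain_cons.mp h1.2
    exact Q.arrow_asymm b x h1.1 h2.1
  -- main case : cycle of length ≥ 3
  set t := x :: y :: t' with hts
  set m := t.length with hm
  have hm2 : 2 ≤ m := by simp [hm, hts]
  set L := b :: t with hL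
  have hch' : List.Chain' Q.arrow (L ++ [b]) := hch
  have hnodup : L.Nodup := by
    by_contra hnd
    obtain ⟨u, d, v, w, hdec⟩ := exists_dup_decomp hnd
    have hinf : (d :: (v ++ [d])) <:+: (L ++ [b]) := by
      refine ⟨u, w ++ [b], ?_⟩
      rw [hdec]
      simp
    have hch2 : List.Chain' Q.arrow (d :: (v ++ [d])) := hch'.infix hinf
    have hch3 : List.Chain Q.arrow d (v ++ [d]) := hch2
    have hlt : v.length < Nat.find hex := by
      have := congrArg List.length hdec
      simp [hL] at this
      omega
    exact hmin v.length hlt ⟨d, v, rfl, hch3⟩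
  have hLlen : L.length = m + 1 := by simp [hL, hm]
  have hfull : (L ++ [b]).length = m + 2 := by simp [hLlen]
  have hget := List.isChain_iff_getElem.mp hch'
  refine hcyc ⟨m - 2, ?_, ?_, ?_⟩
  · exact fun i => L[i.val]'(by omega)
  · intro i j hij
    simp only at hij
    have := List.nodup_iff_injective_getElem.mp hnodup
    have h2 := @this ⟨i.val, by omega⟩ ⟨j.val, by omega⟩ hij
    simp at h2
    exact Fin.ext (by omega)
  · intro i
    have hiv : i.val < m + 1 := by have := i.isLt; omega
    have hstep := hget i.val (by rw [hfull]; omega)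
    have hadd : ((i + 1 : Fin (m - 2 + 3))).val = (i.val + 1) % (m + 1) := by
      have h3 : m - 2 + 3 = m + 1 := by omega
      simp [Fin.add_def, h3]
    by_cases hcase : i.val < m
    · have h1 : (L ++ [b])[i.val]'(by omega) = L[i.val]'(by omega) :=
        List.getElem_append_left (by omega)
      have h2 : (L ++ [b])[i.val + 1]'(by omega) = L[i.val + 1]'(by omega) :=
        List.getElem_append_left (by omega)
      have hmod : (i.val + 1) % (m + 1) = i.val + 1 := Nat.mod_eq_of_lt (by omega)
      simp only [h1, h2] at hstep
      simp only [hadd, hmod]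
      exact hstep
    · have hieq : i.val = m := by omega
      have h1 : (L ++ [b])[i.val]'(by omega) = L[i.val]'(by omega) :=
        List.getElem_append_left (by omega)
      have h2 : (L ++ [b])[i.val + 1]'(by omega) = b := by
        rw [List.getElem_append_right (by omega)]
        simp [hieq, hLlen]
      have h3 : L[(0:ℕ)]'(by omega) = b := rfl
      have hmod : (i.val + 1) % (m + 1) = 0 := by
        rw [hieq]
        simp
      simp only [h1, h2] at hstep
      simp only [hadd, hmod, h3]
      exact hstep


/-- If `Q` is an oriented graph (all connections are arrows, i.e. all Coxeter
components are points) with no oriented cycle, then `H_Q` is a quotient of the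
Kiselman monoid `K_n` with `n = |Q|` (presented here as the Hecke–Kiselman monoid of
the complete oriented graph with arrows `i → j` for `i < j`), and hence is finite. -/
theorem hk_oriented_acyclic_quotient_of_kiselman
    {V : Type} [Fintype V] (Q : HKGraph V)
    (hedge : ∀ i j, ¬ Q.edge i j) (hcyc : ¬ Q.HasOrientedCycle)
    (QK : HKGraph (Fin (Fintype.card V)))
    (hKarrow : ∀ i j, QK.arrow i j ↔ i < j) (hKedge : ∀ i j, ¬ QK.edge i j) :
    (∃ f : QK.HK →* Q.HK, Function.Surjective f) ∧ Finite Q.HK := by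
  classical
  have hirr : ∀ a : V, ¬ Relation.TransGen Q.arrow a a := no_transGen_self Q hcyc
  letI po : PartialOrder V :=
    { le := fun a b => a = b ∨ Relation.TransGen Q.arrow a b
      le_refl := fun a => Or.inl rfl
      le_trans := by
        rintro a b c (rfl | h1) h2
        · exact h2
        · rcases h2 with rfl | h2
          · exact Or.inr h1
          · exact Or.inr (h1.trans h2)
      le_antisymm := by
        rintro a b (rfl | h1) h2
        · rfl
        · rcases h2 with rfl | h2
          · rfl
          · exact absurd (h1.trans h2) (hirr a) }
  letI : Fintype (LinearExtension V) := ‹Fintype V›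
  have hcard : Fintype.card (LinearExtension V) = Fintype.card V := rfl
  let e : Fin (Fintype.card V) ≃o LinearExtension V :=
    Fintype.orderIsoFinOfCardEq (LinearExtension V) hcard
  let g : Fin (Fintype.card V) → V := fun i => e i
  have hginj : Function.Injective g := fun i j h => e.injective h
  have hgsurj : Function.Surjective g := fun v => e.surjective v
  have hkey : ∀ i j : Fin (Fintype.card V), i < j → ¬ Q.arrow (g j) (g i) := by
    intro i j hij harr
    have h1 : (g j : V) ≤ g i := Or.inr (Relation.TransGen.single harr)
    have h2 : toLinearExtension (g j) ≤ toLinearExtension (g i) :=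
      toLinearExtension.monotone h1
    have h3 : e j ≤ e i := h2
    exact absurd h3 (not_le.mpr (e.strictMono hij))
  have hmk : ∀ x y : FreeMonoid V, Q.Rel x y →
      (Con.mk' (conGen Q.Rel)) x = Con.mk' _ y := by
    intro x y h
    exact (Con.eq _).mpr (ConGen.Rel.of _ _ h)
  have Hidem : ∀ v : V, Q.gen v * Q.gen v = Q.gen v := by
    intro v
    rw [show Q.gen v * Q.gen v = Con.mk' _ (of v * of v) from (map_mul _ _ _).symm]
    exact hmk _ _ (HKGraph.Rel.idem v)
  have Hcomm : ∀ v w : V, v ≠ w → ¬ Q.arrow v w → ¬ Q.arrow w v →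
      Q.gen v * Q.gen w = Q.gen w * Q.gen v := by
    intro v w hne h1 h2
    rw [show Q.gen v * Q.gen w = Con.mk' _ (of v * of w) from (map_mul _ _ _).symm,
      show Q.gen w * Q.gen v = Con.mk' _ (of w * of v) from (map_mul _ _ _).symm]
    exact hmk _ _ (HKGraph.Rel.comm v w hne (hedge v w) h1 h2)
  have HarrL : ∀ v w : V, Q.arrow v w →
      Q.gen v * Q.gen w = Q.gen v * Q.gen w * Q.gen v := by
    intro v w h
    rw [show Q.gen v * Q.gen w * Q.gen v = Con.mk' _ (of v * of w * of v) by
      rw [map_mul, map_mul]; rfl,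
      show Q.gen v * Q.gen w = Con.mk' _ (of v * of w) from (map_mul _ _ _).symm]
    exact hmk _ _ (HKGraph.Rel.arrow_left v w h)
  have HarrR : ∀ v w : V, Q.arrow v w →
      Q.gen v * Q.gen w = Q.gen w * Q.gen v * Q.gen w := by
    intro v w h
    rw [show Q.gen w * Q.gen v * Q.gen w = Con.mk' _ (of w * of v * of w) by
      rw [map_mul, map_mul]; rfl,
      show Q.gen v * Q.gen w = Con.mk' _ (of v * of w) from (map_mul _ _ _).symm]
    exact hmk _ _ (HKGraph.Rel.arrow_right v w h)
  have HL : ∀ i j : Fin (Fintype.card V), i < j →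
      Q.gen (g i) * Q.gen (g j) = Q.gen (g i) * Q.gen (g j) * Q.gen (g i) := by
    intro i j hij
    by_cases harr : Q.arrow (g i) (g j)
    · exact HarrL _ _ harr
    · have hc := Hcomm (g i) (g j) (fun h => hij.ne (hginj h)) harr (hkey i j hij)
      calc Q.gen (g i) * Q.gen (g j) = Q.gen (g i) * Q.gen (g i) * Q.gen (g j) := by
            rw [Hidem]
        _ = Q.gen (g i) * (Q.gen (g i) * Q.gen (g j)) := by rw [mul_assoc]
        _ = Q.gen (g i) * (Q.gen (g j) * Q.gen (g i)) := by rw [hc]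
        _ = Q.gen (g i) * Q.gen (g j) * Q.gen (g i) := by rw [mul_assoc]
  have HR : ∀ i j : Fin (Fintype.card V), i < j →
      Q.gen (g i) * Q.gen (g j) = Q.gen (g j) * Q.gen (g i) * Q.gen (g j) := by
    intro i j hij
    by_cases harr : Q.arrow (g i) (g j)
    · exact HarrR _ _ harr
    · have hc := Hcomm (g i) (g j) (fun h => hij.ne (hginj h)) harr (hkey i j hij)
      calc Q.gen (g i) * Q.gen (g j) = Q.gen (g j) * Q.gen (g i) := hc
        _ = Q.gen (g j) * Q.gen (g j) * Q.gen (g i) := by rw [Hidem]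
        _ = Q.gen (g j) * (Q.gen (g j) * Q.gen (g i)) := by rw [mul_assoc]
        _ = Q.gen (g j) * (Q.gen (g i) * Q.gen (g j)) := by rw [hc]
        _ = Q.gen (g j) * Q.gen (g i) * Q.gen (g j) := by rw [mul_assoc]
  let φ : FreeMonoid (Fin (Fintype.card V)) →* Q.HK :=
    FreeMonoid.lift (fun i => Q.gen (g i))
  have hφof : ∀ i, φ (of i) = Q.gen (g i) := fun i => rfl
  have hφrel : ∀ x y, QK.Rel x y → φ x = φ y := by
    intro x y h
    cases h with
    | idem i =>
      rw [map_mul, hφof]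
      exact Hidem (g i)
    | comm i j hne he h1 h2 =>
      exfalso
      rcases lt_or_gt_of_ne hne with h | h
      · exact h1 ((hKarrow i j).mpr h)
      · exact h2 ((hKarrow j i).mpr h)
    | braid i j he => exact absurd he (hKedge i j)
    | arrow_left i j harr =>
      have hij : i < j := (hKarrow i j).mp harr
      rw [map_mul, map_mul, map_mul, hφof, hφof]
      exact HL i j hij
    | arrow_right i j harr =>
      have hij : i < j := (hKarrow i j).mp harr
      rw [map_mul, map_mul, map_mul, hφof, hφof]
      exact HR i j hij
  have hle : conGen QK.Rel ≤ Con.ker φ :=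
    Con.conGen_le.mpr (fun x y h => hφrel x y h)
  let f : QK.HK →* Q.HK := Con.lift _ φ hle
  have hsurj : Function.Surjective f := by
    intro q
    refine Con.induction_on q ?_
    intro w
    have hlist : ∀ l : List V, ∃ y : QK.HK, f y = (Con.mk' (conGen Q.Rel)) (ofList l) := by
      intro l
      induction l with
      | nil =>
        refine ⟨1, ?_⟩
        rw [map_one]
        exact (map_one (Con.mk' (conGen Q.Rel))).symm
      | cons a t2 ih =>
        obtain ⟨y, hy⟩ := ih
        obtain ⟨i, hi⟩ := hgsurj a
        refine ⟨Con.mk' _ (FreeMonoid.of i) * y, ?_⟩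
        rw [map_mul, hy]
        have hf1 : f (Con.mk' _ (FreeMonoid.of i)) = Q.gen (g i) := Con.lift_mk' hle _
        rw [hf1, hi]
        rw [show Q.gen a = Con.mk' (conGen Q.Rel) (of a) from rfl, ← map_mul]
        rfl
    obtain ⟨y, hy⟩ := hlist (FreeMonoid.toList w)
    exact ⟨y, by rw [hy]; rfl⟩
  have hfinK : Finite QK.HK := kiselman_finite QK hKarrow
  exact ⟨⟨f, hsurj⟩, Finite.of_surjective f hsurj⟩
end
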